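/- Let ψ₁ be a Schwartz function on ℝ with 0 ≤ ψ₁ ≤ 1 and support a compact subset of (0,1), let ψ(y) = ψ₁(y) − ψ₁(−y), and let Ψ(x,ξ₁,ξ₂) = ψ(x)ψ(ξ₂)ψ(ξ₁−ξ₂). Let σ_BH(x,ξ₁,ξ₂) = −πi·sign(ξ₁−ξ₂). Then for every r > 1, σ_BH belongs to 𝓜^{(∞,1,r);(∞,∞,1)} with window Ψ; that is, ∫_ℝ sup_{ξ₁,ξ₂∈ℝ} (∫_ℝ (∫_ℝ sup_{x∈ℝ} |𝒱_Ψ σ_BH(x,t₁,t₂,ξ₁,ξ₂,ν)| dt₁)^{r} dt₂)^{1/r} dν < ∞. -/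

import Mathlib

open MeasureTheory Complex SchwartzMap FourierTransform
open scoped ENNReal NNReal

noncomputable section

/-- `e2pi a = e^{2πi a}`. -/
def e2pi (a : ℝ) : ℂ := Complex.exp (2 * Real.pi * Complex.I * (a : ℂ))

/-- Short-time Fourier transform on `ℝ`: `V_φ f (t, ν)`. -/
def STFT1 (φ f : ℝ → ℂ) (t ν : ℝ) : ℂ := ∫ y : ℝ, f y * e2pi (-(y * ν)) * φ (y - t)

/-- The Gaussian window `e^{-x²}` on `ℝ`. -/
def gauss1 : ℝ → ℂ := fun x => (Real.exp (-x ^ 2) : ℝ)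

/-- `L^p`-type norm (`ℝ≥0∞`-valued) with essential supremum in case `p = ∞`. -/
def eNorm {α : Type*} [MeasurableSpace α] (μ : Measure α) (p : ℝ≥0∞) (F : α → ℝ≥0∞) : ℝ≥0∞ :=
  if p = ∞ then essSup F μ else (∫⁻ a, F a ^ p.toReal ∂μ) ^ (1 / p.toReal)

/-- Modulation space norm `‖f‖_{M^{p,q}}` on `ℝ` with the Gaussian window. -/
def modNorm1 (p q : ℝ≥0∞) (f : ℝ → ℂ) : ℝ≥0∞ :=
  eNorm volume q fun ν => eNorm volume p fun t => (‖STFT1 gauss1 f t ν‖₊ : ℝ≥0∞)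

/-- Fourier transform on `ℝ`. -/
def FT1 (f : ℝ → ℂ) (ξ : ℝ) : ℂ := ∫ y : ℝ, f y * e2pi (-(y * ξ))

/-- Symbol short-time Fourier transform of a symbol on `ℝ³`. -/
def symbSTFT3 (Ψ σ : ℝ × ℝ × ℝ → ℂ) (x t₁ t₂ ξ₁ ξ₂ ν : ℝ) : ℂ :=
  ∫ X : ℝ × ℝ × ℝ, σ X * Ψ (X.1 - x, X.2.1 - ξ₁, X.2.2 - ξ₂) *
    e2pi (-(X.1 * ν - t₁ * X.2.1 - t₂ * X.2.2))

/-- Symbol short-time Fourier transform of a symbol on `ℝ⁴`. -/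
def symbSTFT4 (Ψ σ : ℝ × ℝ × ℝ × ℝ → ℂ) (x t₁ t₂ t₃ ξ₁ ξ₂ ξ₃ ν : ℝ) : ℂ :=
  ∫ X : ℝ × ℝ × ℝ × ℝ, σ X * Ψ (X.1 - x, X.2.1 - ξ₁, X.2.2.1 - ξ₂, X.2.2.2 - ξ₃) *
    e2pi (-(X.1 * ν - t₁ * X.2.1 - t₂ * X.2.2.1 - t₃ * X.2.2.2))

/-- The bilinear Hilbert transform as an (absolutely convergent) bilinear Fourier
multiplier for Schwartz functions. -/
def BH (f g : ℝ → ℂ) (x : ℝ) : ℂ :=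
  ∫ ξ : ℝ × ℝ, (-(Real.pi : ℂ) * Complex.I * (Real.sign (ξ.1 - ξ.2) : ℝ)) *
    FT1 f ξ.1 * FT1 g ξ.2 * e2pi (x * (ξ.1 + ξ.2))

/-- The trilinear Hilbert transform as an (absolutely convergent) trilinear Fourier
multiplier for Schwartz functions. -/
def TH (f g h : ℝ → ℂ) (x : ℝ) : ℂ :=
  ∫ ξ : ℝ × ℝ × ℝ, ((Real.pi : ℂ) * Complex.I * (Real.sign (ξ.1 - ξ.2.1 - 2 * ξ.2.2) : ℝ)) *
    FT1 f ξ.1 * FT1 g ξ.2.1 * FT1 h ξ.2.2 * e2pi (x * (ξ.1 + ξ.2.1 + ξ.2.2))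

lemma measurable_sign' : Measurable Real.sign := by
  unfold Real.sign
  exact Measurable.ite measurableSet_Iio measurable_const
    (Measurable.ite measurableSet_Ioi measurable_const measurable_const)

lemma abs_sign_le (u : ℝ) : |Real.sign u| ≤ 1 := by
  rcases Real.sign_apply_eq u with h | h | h <;> rw [h] <;> norm_num

lemma e2pi_add (a b : ℝ) : e2pi (a+b) = e2pi a * e2pi b := by
  simp [e2pi, ← Complex.exp_add]; ring_nf

lemma norm_e2pi (a : ℝ) : ‖e2pi a‖ = 1 := by
  rw [e2pi, Complex.norm_exp]
  norm_num [Complex.mul_re, Complex.mul_im]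

lemma continuous_e2pi : Continuous e2pi := by
  unfold e2pi; fun_prop

lemma fourier_eq (f : ℝ → ℂ) (ν : ℝ) : 𝓕 f ν = ∫ v : ℝ, f v * e2pi (-(v * ν)) := by
  rw [Real.fourier_real_eq_integral_exp_smul]
  congr 1; funext v
  rw [smul_eq_mul, mul_comm, e2pi]
  norm_num; left; ring

lemma transFT (Φ : 𝓢(ℝ, ℂ)) (s b : ℝ) :
    ∫ v : ℝ, Φ (v - b) * e2pi (s * v) = e2pi (s * b) * 𝓕 ⇑Φ (-s) := by
  rw [← integral_add_right_eq_self (fun v => Φ (v - b) * e2pi (s * v)) b]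
  have h1 : ∀ v : ℝ, Φ (v + b - b) * e2pi (s * (v + b))
      = (Φ v * e2pi (-(v * -s))) * e2pi (s * b) := by
    intro v
    have : s * (v + b) = -(v * -s) + s * b := by ring
    rw [add_sub_cancel_right, this, e2pi_add]; ring
  simp only [h1]
  rw [integral_mul_const, fourier_eq]
  ring

lemma schwartz_decay2 (f : 𝓢(ℝ, ℂ)) : ∃ C : ℝ, 0 < C ∧ ∀ s : ℝ, ‖f s‖ ≤ C / (1 + s^2) := by
  obtain ⟨C0, hC0p, hC0⟩ := f.decay 0 0
  obtain ⟨C2, hC2p, hC2⟩ := f.decay 2 0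
  refine ⟨C0 + C2, by positivity, fun s => ?_⟩
  have h0 := hC0 s
  have h2 := hC2 s
  rw [norm_iteratedFDeriv_zero] at h0 h2
  simp only [pow_zero, one_mul, Real.norm_eq_abs] at h0 h2
  rw [le_div_iff₀ (by positivity)]
  have : |s|^2 = s^2 := sq_abs s
  nlinarith [norm_nonneg (f s)]

lemma supp_aux (Φ : 𝓢(ℝ, ℂ)) (h0 : ∀ y : ℝ, 1 ≤ |y| → Φ y = 0) (a : ℝ) :
    ∀ x : ℝ, x ∉ Set.Icc (a - 1) (a + 1) → Φ (x - a) = 0 := by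
  intro x hx
  apply h0
  rw [Set.mem_Icc, not_and_or, not_le, not_le] at hx
  rw [le_abs]
  rcases hx with h | h
  · right; linarith
  · left; linarith

lemma ibp_halfline (Φ : 𝓢(ℝ, ℂ)) (h0 : ∀ y : ℝ, 1 ≤ |y| → Φ y = 0) {t : ℝ} (ht : t ≠ 0) (a : ℝ) :
    ‖∫ u in Set.Ioi (0:ℝ), Φ (u - a) * e2pi (t * u)‖
        ≤ (‖Φ (-a)‖ + ∫ u : ℝ, ‖deriv (⇑Φ) u‖) / (2 * Real.pi * |t|) ∧
    ‖∫ u in Set.Iic (0:ℝ), Φ (u - a) * e2pi (t * u)‖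
        ≤ (‖Φ (-a)‖ + ∫ u : ℝ, ‖deriv (⇑Φ) u‖) / (2 * Real.pi * |t|) := by
  set c : ℂ := 2 * (Real.pi : ℂ) * Complex.I * (t : ℂ) with hc_def
  have hc : c ≠ 0 := by
    simp [hc_def, Complex.ext_iff, Real.pi_ne_zero, ht]
  have hnc : ‖c‖ = 2 * Real.pi * |t| := by
    rw [hc_def]
    simp [map_mul,
      abs_of_pos Real.pi_pos]
  set g₀ : ℝ → ℂ := fun u => Φ (u - a) with hg₀_def
  have hsub : ContDiff ℝ ((⊤ : ℕ∞)) (fun u : ℝ => u - a) := by fun_prop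
  have hg₀smooth : ContDiff ℝ ((⊤ : ℕ∞)) g₀ := (Φ.smooth ⊤).comp hsub
  have hg₀supp : HasCompactSupport g₀ :=
    HasCompactSupport.intro isCompact_Icc (supp_aux Φ h0 a)
  set E : ℝ → ℂ := fun u => e2pi (t * u) with hE_def
  have hEeq : E = fun u : ℝ => Complex.exp (c * (u : ℂ)) := by
    funext u; rw [hE_def]; simp only [e2pi]; congr 1; push_cast; ring
  have hEsmooth : ContDiff ℝ ((⊤ : ℕ∞)) E := by
    rw [hEeq]
    exact Complex.contDiff_exp.comp (contDiff_const.mul Complex.ofRealCLM.contDiff)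
  have hE : ∀ u : ℝ, HasDerivAt E (c * E u) u := by
    intro u
    have h1 : HasDerivAt (fun u : ℝ => (u : ℂ)) 1 u := by
      simpa using (hasDerivAt_id u).ofReal_comp
    have h2 := ((h1.const_mul c).cexp)
    rw [hEeq]
    simpa [mul_comm] using h2
  set F : ℝ → ℂ := fun u => g₀ u * E u * c⁻¹ with hF_def
  have hF : ∀ u : ℝ, HasDerivAt F (g₀ u * E u + deriv g₀ u * E u * c⁻¹) u := by
    intro u
    have hg₀d : HasDerivAt g₀ (deriv g₀ u) u :=
      ((hg₀smooth.differentiable (by simp)) u).hasDerivAt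
    have := (hg₀d.mul (hE u)).mul_const c⁻¹
    have heq : g₀ u * E u + deriv g₀ u * E u * c⁻¹
        = (deriv g₀ u * E u + g₀ u * (c * E u)) * c⁻¹ := by
      linear_combination (-(g₀ u * E u)) * (mul_inv_cancel₀ hc)
    rw [heq]; exact this
  have hderiv_eq : deriv F = fun u => g₀ u * E u + deriv g₀ u * E u * c⁻¹ :=
    funext fun u => (hF u).deriv
  have hFsupp : HasCompactSupport F := (hg₀supp.mul_right).mul_right
  have hFc1 : ContDiff ℝ 1 F :=
    ((hg₀smooth.mul hEsmooth).mul contDiff_const).of_le (by exact_mod_cast le_top)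
  have hcont₁ : Continuous fun u => g₀ u * E u :=
    (hg₀smooth.continuous).mul hEsmooth.continuous
  have hcontd : Continuous (deriv g₀) := hg₀smooth.continuous_deriv (by exact_mod_cast le_top)
  have hint₁ : Integrable (fun u => g₀ u * E u) :=
    hcont₁.integrable_of_hasCompactSupport hg₀supp.mul_right
  have hint₂ : Integrable (fun u => deriv g₀ u * E u * c⁻¹) :=
    (((hcontd.mul hEsmooth.continuous).mul continuous_const)).integrable_of_hasCompactSupport
      ((hg₀supp.deriv.mul_right).mul_right)
  have hF0 : ‖F 0‖ = ‖Φ (-a)‖ * ‖c‖⁻¹ := by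
    have h1 : F 0 = Φ (-a) * e2pi 0 * c⁻¹ := by
      simp [hF_def, hg₀_def, hE_def, zero_sub]
    rw [h1, norm_mul, norm_mul, norm_inv, norm_e2pi, mul_one]
  have hbd₂ : ∀ s : Set ℝ, ‖∫ u in s, deriv g₀ u * E u * c⁻¹‖
      ≤ (∫ u : ℝ, ‖deriv (⇑Φ) u‖) * ‖c‖⁻¹ := by
    intro s
    calc ‖∫ u in s, deriv g₀ u * E u * c⁻¹‖ ≤ ∫ u in s, ‖deriv g₀ u * E u * c⁻¹‖ :=
          norm_integral_le_integral_norm _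
    _ = ∫ u in s, ‖deriv g₀ u‖ * ‖c‖⁻¹ := by
          congr 1; funext u
          rw [norm_mul, norm_mul, norm_inv, hE_def, norm_e2pi, mul_one]
    _ = (∫ u in s, ‖deriv g₀ u‖) * ‖c‖⁻¹ := integral_mul_const _ _
    _ ≤ (∫ u : ℝ, ‖deriv g₀ u‖) * ‖c‖⁻¹ := by
          refine mul_le_mul_of_nonneg_right ?_ (by positivity)
          exact setIntegral_le_integral
            ((hcontd.integrable_of_hasCompactSupport hg₀supp.deriv).norm)
            (Filter.Eventually.of_forall fun u => norm_nonneg _)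
    _ = (∫ u : ℝ, ‖deriv (⇑Φ) u‖) * ‖c‖⁻¹ := by
          congr 1
          have h2 : ∀ u : ℝ, deriv g₀ u = deriv (⇑Φ) (u - a) := by
            intro u
            rw [hg₀_def]
            exact deriv_comp_sub_const (f := ⇑Φ) ..
          simp only [h2]
          exact integral_sub_right_eq_self (fun u => ‖deriv (⇑Φ) u‖) a
  constructor
  · have key := hFsupp.integral_Ioi_deriv_eq hFc1 0
    rw [hderiv_eq] at key
    rw [integral_add hint₁.integrableOn hint₂.integrableOn] at key
    have heq : ∫ u in Set.Ioi (0:ℝ), Φ (u - a) * e2pi (t * u)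
        = -F 0 - ∫ u in Set.Ioi (0:ℝ), deriv g₀ u * E u * c⁻¹ := by
      rw [hg₀_def, hE_def] at key ⊢
      linear_combination key
    rw [heq]
    calc ‖-F 0 - ∫ u in Set.Ioi (0:ℝ), deriv g₀ u * E u * c⁻¹‖
        = ‖F 0 + ∫ u in Set.Ioi (0:ℝ), deriv g₀ u * E u * c⁻¹‖ := by
          rw [show -F 0 - (∫ u in Set.Ioi (0:ℝ), deriv g₀ u * E u * c⁻¹)
            = -(F 0 + ∫ u in Set.Ioi (0:ℝ), deriv g₀ u * E u * c⁻¹) by ring, norm_neg]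
    _ ≤ ‖F 0‖ + ‖∫ u in Set.Ioi (0:ℝ), deriv g₀ u * E u * c⁻¹‖ := norm_add_le _ _
    _ ≤ ‖Φ (-a)‖ * ‖c‖⁻¹ + (∫ u : ℝ, ‖deriv (⇑Φ) u‖) * ‖c‖⁻¹ := by
          rw [hF0]; gcongr; exact hbd₂ _
    _ = (‖Φ (-a)‖ + ∫ u : ℝ, ‖deriv (⇑Φ) u‖) / (2 * Real.pi * |t|) := by
          rw [hnc]; ring
  · have key := hFsupp.integral_Iic_deriv_eq hFc1 0
    rw [hderiv_eq] at key
    rw [integral_add hint₁.integrableOn hint₂.integrableOn] at key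
    have heq : ∫ u in Set.Iic (0:ℝ), Φ (u - a) * e2pi (t * u)
        = F 0 - ∫ u in Set.Iic (0:ℝ), deriv g₀ u * E u * c⁻¹ := by
      rw [hg₀_def, hE_def] at key ⊢
      linear_combination key
    rw [heq]
    calc ‖F 0 - ∫ u in Set.Iic (0:ℝ), deriv g₀ u * E u * c⁻¹‖
        ≤ ‖F 0‖ + ‖∫ u in Set.Iic (0:ℝ), deriv g₀ u * E u * c⁻¹‖ := norm_sub_le _ _
    _ ≤ ‖Φ (-a)‖ * ‖c‖⁻¹ + (∫ u : ℝ, ‖deriv (⇑Φ) u‖) * ‖c‖⁻¹ := by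
          rw [hF0]; gcongr; exact hbd₂ _
    _ = (‖Φ (-a)‖ + ∫ u : ℝ, ‖deriv (⇑Φ) u‖) / (2 * Real.pi * |t|) := by
          rw [hnc]; ring

lemma window_norm_integrable (Φ : 𝓢(ℝ, ℂ)) (a : ℝ) :
    Integrable (fun u : ℝ => ‖Φ (u - a)‖) := (Φ.integrable.comp_sub_right a).norm

lemma window_integral_le (Φ : 𝓢(ℝ, ℂ)) (h0 : ∀ y : ℝ, 1 ≤ |y| → Φ y = 0)
    (hbd : ∀ y : ℝ, ‖Φ y‖ ≤ 1) : ∫ y : ℝ, ‖Φ y‖ ≤ 2 := by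
  have hle : ∀ y : ℝ, ‖Φ y‖ ≤ Set.indicator (Set.Icc (-1:ℝ) 1) (fun _ => (1:ℝ)) y := by
    intro y
    by_cases h : y ∈ Set.Icc (-1:ℝ) 1
    · rw [Set.indicator_of_mem h]; exact hbd y
    · rw [Set.indicator_of_notMem h, h0 y ?_, norm_zero]
      rw [Set.mem_Icc, not_and_or, not_le, not_le] at h
      rw [le_abs]
      rcases h with h | h
      · right; linarith
      · left; linarith
  calc ∫ y : ℝ, ‖Φ y‖ ≤ ∫ y : ℝ, Set.indicator (Set.Icc (-1:ℝ) 1) (fun _ => (1:ℝ)) y :=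
        integral_mono Φ.integrable.norm
          ((integrable_indicator_iff measurableSet_Icc).2 (integrableOn_const (by simp))) hle
  _ = 2 := by
      rw [integral_indicator_const (1:ℝ) measurableSet_Icc]
      simp [Real.volume_Icc]
      norm_num

lemma sign_integrand_integrable (Φ : 𝓢(ℝ, ℂ)) (t a : ℝ) :
    Integrable (fun u : ℝ => (Real.sign u : ℂ) * Φ (u - a) * e2pi (t * u)) := by
  apply Integrable.mono' (window_norm_integrable Φ a)
  · apply Measurable.aestronglyMeasurable
    apply Measurable.mul
    apply Measurable.mul
    · exact Complex.measurable_ofReal.comp measurable_sign'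
    · exact (Φ.continuous.comp (continuous_id.sub continuous_const)).measurable
    · exact (continuous_e2pi.comp (continuous_const.mul continuous_id)).measurable
  · refine Filter.Eventually.of_forall fun u => ?_
    rw [norm_mul, norm_mul, norm_e2pi, mul_one, Complex.norm_real, Real.norm_eq_abs]
    calc |Real.sign u| * ‖Φ (u - a)‖ ≤ 1 * ‖Φ (u - a)‖ := by
          gcongr; exact abs_sign_le u
    _ = ‖Φ (u - a)‖ := one_mul _

lemma G_bound (Φ : 𝓢(ℝ, ℂ)) (h0 : ∀ y : ℝ, 1 ≤ |y| → Φ y = 0)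
    (hbd : ∀ y : ℝ, ‖Φ y‖ ≤ 1) :
    ∃ K : ℝ, 0 < K ∧ ∀ t a : ℝ,
      ‖∫ u : ℝ, (Real.sign u : ℂ) * Φ (u - a) * e2pi (t * u)‖ ≤ K / (1 + |t|) := by
  set Kd : ℝ := ∫ u : ℝ, ‖deriv (⇑Φ) u‖ with hKd_def
  have hKd0 : 0 ≤ Kd := integral_nonneg fun u => norm_nonneg _
  refine ⟨4 + 2 * (1 + Kd), by positivity, fun t a => ?_⟩
  have hG2 : ‖∫ u : ℝ, (Real.sign u : ℂ) * Φ (u - a) * e2pi (t * u)‖ ≤ 2 := by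
    calc ‖∫ u : ℝ, (Real.sign u : ℂ) * Φ (u - a) * e2pi (t * u)‖
        ≤ ∫ u : ℝ, ‖(Real.sign u : ℂ) * Φ (u - a) * e2pi (t * u)‖ :=
          norm_integral_le_integral_norm _
    _ ≤ ∫ u : ℝ, ‖Φ (u - a)‖ := by
        apply integral_mono ((sign_integrand_integrable Φ t a).norm)
          (window_norm_integrable Φ a)
        intro u
        dsimp only
        rw [norm_mul, norm_mul, norm_e2pi, mul_one, Complex.norm_real, Real.norm_eq_abs]
        calc |Real.sign u| * ‖Φ (u - a)‖ ≤ 1 * ‖Φ (u - a)‖ := by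
              gcongr; exact abs_sign_le u
        _ = ‖Φ (u - a)‖ := one_mul _
    _ = ∫ y : ℝ, ‖Φ y‖ := integral_sub_right_eq_self (fun u => ‖Φ u‖) a
    _ ≤ 2 := window_integral_le Φ h0 hbd
  rcases le_or_gt |t| 1 with hcase | hcase
  · rw [div_eq_mul_inv, ← div_eq_mul_inv, le_div_iff₀ (by positivity)]
    nlinarith [norm_nonneg (∫ u : ℝ, (Real.sign u : ℂ) * Φ (u - a) * e2pi (t * u))]
  · have ht : t ≠ 0 := by
      intro h; rw [h] at hcase; simp at hcase; linarith
    obtain ⟨hIoi, hIic⟩ := ibp_halfline Φ h0 ht a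
    have hsplit : (∫ u : ℝ, (Real.sign u : ℂ) * Φ (u - a) * e2pi (t * u))
        = -(∫ u in Set.Iic (0:ℝ), Φ (u - a) * e2pi (t * u))
          + ∫ u in Set.Ioi (0:ℝ), Φ (u - a) * e2pi (t * u) := by
      rw [← intervalIntegral.integral_Iic_add_Ioi
        (sign_integrand_integrable Φ t a).integrableOn
        (sign_integrand_integrable Φ t a).integrableOn]
      congr 1
      · calc ∫ u in Set.Iic (0:ℝ), (Real.sign u : ℂ) * Φ (u - a) * e2pi (t * u)
            = ∫ u in Set.Iio (0:ℝ), (Real.sign u : ℂ) * Φ (u - a) * e2pi (t * u) :=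
              (setIntegral_congr_set (Iio_ae_eq_Iic (a := (0:ℝ)))).symm
        _ = ∫ u in Set.Iio (0:ℝ), -(Φ (u - a) * e2pi (t * u)) := by
              apply setIntegral_congr_fun measurableSet_Iio
              intro u hu
              dsimp only
              rw [Real.sign_of_neg hu]
              push_cast; ring
        _ = -(∫ u in Set.Iio (0:ℝ), Φ (u - a) * e2pi (t * u)) := integral_neg _
        _ = -(∫ u in Set.Iic (0:ℝ), Φ (u - a) * e2pi (t * u)) := by
              rw [setIntegral_congr_set (Iio_ae_eq_Iic (a := (0:ℝ)))]
      · apply setIntegral_congr_fun measurableSet_Ioi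
        intro u hu
        dsimp only
        rw [Real.sign_of_pos hu]
        push_cast; ring
    have hB : ‖∫ u : ℝ, (Real.sign u : ℂ) * Φ (u - a) * e2pi (t * u)‖
        ≤ (1 + Kd) / (Real.pi * |t|) := by
      rw [hsplit]
      have hΦa : ‖Φ (-a)‖ ≤ 1 := hbd (-a)
      calc ‖-(∫ u in Set.Iic (0:ℝ), Φ (u - a) * e2pi (t * u))
            + ∫ u in Set.Ioi (0:ℝ), Φ (u - a) * e2pi (t * u)‖
          ≤ ‖∫ u in Set.Iic (0:ℝ), Φ (u - a) * e2pi (t * u)‖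
            + ‖∫ u in Set.Ioi (0:ℝ), Φ (u - a) * e2pi (t * u)‖ := by
            rw [← norm_neg (∫ u in Set.Iic (0:ℝ), Φ (u - a) * e2pi (t * u))] 
            exact norm_add_le _ _
      _ ≤ (‖Φ (-a)‖ + Kd) / (2 * Real.pi * |t|) + (‖Φ (-a)‖ + Kd) / (2 * Real.pi * |t|) := by
            gcongr
      _ ≤ (1 + Kd) / (2 * Real.pi * |t|) + (1 + Kd) / (2 * Real.pi * |t|) := by gcongr <;> positivity
      _ = (1 + Kd) / (Real.pi * |t|) := by
            rw [← add_div]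
            rw [show (2:ℝ) * Real.pi * |t| = 2 * (Real.pi * |t|) by ring]
            rw [div_mul_eq_div_div_swap]
            ring
    calc ‖∫ u : ℝ, (Real.sign u : ℂ) * Φ (u - a) * e2pi (t * u)‖
        ≤ (1 + Kd) / (Real.pi * |t|) := hB
    _ ≤ (4 + 2 * (1 + Kd)) / (1 + |t|) := by
        rw [div_le_div_iff₀ (by positivity) (by positivity)]
        have h1 : (1 + Kd) * (1 + |t|) ≤ 2 * (1 + Kd) * |t| := by nlinarith
        have h2 : 2 * (1 + Kd) * |t| ≤ (4 + 2 * (1 + Kd)) * (Real.pi * |t|) := by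
          nlinarith [Real.pi_gt_three, abs_nonneg t, hKd0]
        linarith

lemma g_integrable (Φ : 𝓢(ℝ, ℂ)) (h0 : ∀ y : ℝ, 1 ≤ |y| → Φ y = 0)
    (hbd : ∀ y : ℝ, ‖Φ y‖ ≤ 1) (t₁ t₂ a b : ℝ) :
    Integrable (fun q : ℝ × ℝ => (-(Real.pi:ℂ) * Complex.I) * (Real.sign (q.1 - q.2) : ℂ)
      * Φ (q.2 - b) * Φ (q.1 - q.2 - a) * e2pi (t₁ * q.1) * e2pi (t₂ * q.2))
      ((volume : Measure ℝ).prod volume) := by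
  set S : Set (ℝ × ℝ) := Set.Icc (b + a - 2) (b + a + 2) ×ˢ Set.Icc (b - 1) (b + 1) with hS_def
  have hSmeas : MeasurableSet S := measurableSet_Icc.prod measurableSet_Icc
  apply Integrable.mono' (g := S.indicator fun _ => Real.pi)
  · rw [integrable_indicator_iff hSmeas]
    refine integrableOn_const ?_
    rw [hS_def, Measure.prod_prod]
    exact (ENNReal.mul_lt_top (by simp) (by simp)).ne
  · apply Measurable.aestronglyMeasurable
    refine ((((((Complex.measurable_ofReal.comp
        (measurable_sign'.comp (measurable_fst.sub measurable_snd))).const_mul _).mul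
        ?_).mul ?_).mul ?_).mul ?_)
    · exact (Φ.continuous.comp (continuous_snd.sub continuous_const)).measurable
    · exact (Φ.continuous.comp ((continuous_fst.sub continuous_snd).sub
        continuous_const)).measurable
    · exact (continuous_e2pi.comp (continuous_const.mul continuous_fst)).measurable
    · exact (continuous_e2pi.comp (continuous_const.mul continuous_snd)).measurable
  · refine Filter.Eventually.of_forall fun q => ?_
    by_cases hq : q ∈ S
    · rw [Set.indicator_of_mem hq]
      have hnormc : ‖(-(Real.pi:ℂ) * Complex.I)‖ = Real.pi := by
        simp [abs_of_pos Real.pi_pos]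
      calc ‖(-(Real.pi:ℂ) * Complex.I) * (Real.sign (q.1 - q.2) : ℂ)
            * Φ (q.2 - b) * Φ (q.1 - q.2 - a) * e2pi (t₁ * q.1) * e2pi (t₂ * q.2)‖
          = Real.pi * |Real.sign (q.1 - q.2)| * ‖Φ (q.2 - b)‖ * ‖Φ (q.1 - q.2 - a)‖ := by
            simp only [norm_mul, norm_e2pi, mul_one, hnormc, Complex.norm_real,
              Real.norm_eq_abs]
      _ = Real.pi * (|Real.sign (q.1 - q.2)| * ‖Φ (q.2 - b)‖ * ‖Φ (q.1 - q.2 - a)‖) := by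
            ring
      _ ≤ Real.pi * 1 := by
            refine mul_le_mul_of_nonneg_left ?_ Real.pi_pos.le
            exact mul_le_one₀ (mul_le_one₀ (abs_sign_le _) (norm_nonneg _) (hbd _))
              (norm_nonneg _) (hbd _)
      _ = Real.pi := mul_one _
    · rw [Set.indicator_of_notMem hq]
      have hzero : Φ (q.2 - b) = 0 ∨ Φ (q.1 - q.2 - a) = 0 := by
        by_cases h2 : 1 ≤ |q.2 - b|
        · exact Or.inl (h0 _ h2)
        · push_neg at h2
          right
          apply h0
          rw [hS_def, Set.mem_prod, not_and_or] at hq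
          have hq2 : q.2 ∈ Set.Icc (b - 1) (b + 1) := by
            rw [Set.mem_Icc]
            rw [abs_lt] at h2
            constructor <;> linarith
          have hq1 : q.1 ∉ Set.Icc (b + a - 2) (b + a + 2) := by tauto
          rw [Set.mem_Icc, not_and_or, not_le, not_le] at hq1
          have htri : |q.1 - b - a| ≤ |q.1 - q.2 - a| + |q.2 - b| := by
            have : q.1 - b - a = (q.1 - q.2 - a) + (q.2 - b) := by ring
            rw [this]
            exact abs_add_le _ _
          have h1 : 2 < |q.1 - b - a| := by
            rw [lt_abs]
            rcases hq1 with h | h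
            · right; linarith
            · left; linarith
          linarith
      rcases hzero with h | h <;> rw [h] <;> simp [norm_nonneg, Real.pi_pos.le]

lemma factorize (Φ : 𝓢(ℝ, ℂ)) (h0 : ∀ y : ℝ, 1 ≤ |y| → Φ y = 0)
    (hbd : ∀ y : ℝ, ‖Φ y‖ ≤ 1) (x t₁ t₂ ξ₁ ξ₂ ν : ℝ) :
    symbSTFT3 (fun X => Φ X.1 * Φ X.2.2 * Φ (X.2.1 - X.2.2))
      (fun X => -(Real.pi : ℂ) * Complex.I * (Real.sign (X.2.1 - X.2.2) : ℝ)) x t₁ t₂ ξ₁ ξ₂ ν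
    = (e2pi (-ν * x) * 𝓕 ⇑Φ ν) * ((-(Real.pi:ℂ) * Complex.I)
        * (∫ u : ℝ, (Real.sign u : ℂ) * Φ (u - (ξ₁ - ξ₂)) * e2pi (t₁ * u))
        * (e2pi ((t₁ + t₂) * ξ₂) * 𝓕 ⇑Φ (-(t₁ + t₂)))) := by
  set c : ℂ := -(Real.pi:ℂ) * Complex.I with hc_def
  set a : ℝ := ξ₁ - ξ₂ with ha_def
  set f : ℝ → ℂ := fun s => Φ (s - x) * e2pi (-ν * s) with hf_def
  set g : ℝ × ℝ → ℂ := fun q => c * (Real.sign (q.1 - q.2) : ℂ)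
      * Φ (q.2 - ξ₂) * Φ (q.1 - q.2 - a) * e2pi (t₁ * q.1) * e2pi (t₂ * q.2) with hg_def
  have hsplit : ∀ X : ℝ × ℝ × ℝ,
      (-(Real.pi : ℂ) * Complex.I * (Real.sign (X.2.1 - X.2.2) : ℝ))
        * (Φ (X.1 - x) * Φ (X.2.2 - ξ₂) * Φ ((X.2.1 - ξ₁) - (X.2.2 - ξ₂)))
        * e2pi (-(X.1 * ν - t₁ * X.2.1 - t₂ * X.2.2))
      = f X.1 * g (X.2.1, X.2.2) := by
    intro X
    have harg : (X.2.1 - ξ₁) - (X.2.2 - ξ₂) = X.2.1 - X.2.2 - a := by rw [ha_def]; ring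
    have hph : -(X.1 * ν - t₁ * X.2.1 - t₂ * X.2.2)
        = (-ν * X.1) + ((t₁ * X.2.1) + (t₂ * X.2.2)) := by ring
    rw [harg, hph, e2pi_add, e2pi_add, hf_def, hg_def, hc_def]
    dsimp only
    ring
  rw [symbSTFT3]
  have hfun : (fun X : ℝ × ℝ × ℝ =>
      (fun X : ℝ × ℝ × ℝ => -(Real.pi : ℂ) * Complex.I * (Real.sign (X.2.1 - X.2.2) : ℝ)) X
      * (fun X : ℝ × ℝ × ℝ => Φ X.1 * Φ X.2.2 * Φ (X.2.1 - X.2.2))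
          (X.1 - x, X.2.1 - ξ₁, X.2.2 - ξ₂)
      * e2pi (-(X.1 * ν - t₁ * X.2.1 - t₂ * X.2.2)))
      = fun X : ℝ × ℝ × ℝ => f X.1 * g X.2 := by
    funext X
    exact hsplit X
  rw [hfun, Measure.volume_eq_prod, integral_prod_mul]
  -- first factor
  have hfactor1 : ∫ s : ℝ, f s = e2pi (-ν * x) * 𝓕 ⇑Φ ν := by
    rw [hf_def]
    have := transFT Φ (-ν) x
    rw [this]
    ring_nf
  -- second factor
  have hg_int : Integrable g ((volume : Measure ℝ).prod volume) := by
    rw [hg_def, hc_def]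
    exact g_integrable Φ h0 hbd t₁ t₂ a ξ₂
  have hinner : ∀ q₂ : ℝ, (∫ q₁ : ℝ, g (q₁, q₂))
      = (Φ (q₂ - ξ₂) * e2pi ((t₁ + t₂) * q₂) * c)
        * ∫ u : ℝ, (Real.sign u : ℂ) * Φ (u - a) * e2pi (t₁ * u) := by
    intro q₂
    rw [← integral_add_right_eq_self (fun q₁ => g (q₁, q₂)) q₂]
    have hpt : ∀ u : ℝ, g (u + q₂, q₂)
        = (Φ (q₂ - ξ₂) * e2pi ((t₁ + t₂) * q₂) * c)
          * ((Real.sign u : ℂ) * Φ (u - a) * e2pi (t₁ * u)) := by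
      intro u
      rw [hg_def]
      dsimp only
      rw [add_sub_cancel_right]
      have h1 : t₁ * (u + q₂) = t₁ * u + t₁ * q₂ := by ring
      have h2 : (t₁ + t₂) * q₂ = t₁ * q₂ + t₂ * q₂ := by ring
      rw [h1, h2, e2pi_add, e2pi_add]
      ring
    simp only [hpt]
    exact integral_const_mul _ _
  rw [Measure.volume_eq_prod, integral_prod_symm g hg_int]
  simp only [hinner]
  rw [integral_mul_const]
  rw [hfactor1]
  have hfactor2 : ∫ q₂ : ℝ, Φ (q₂ - ξ₂) * e2pi ((t₁ + t₂) * q₂) * c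
      = c * (e2pi ((t₁ + t₂) * ξ₂) * 𝓕 ⇑Φ (-(t₁ + t₂))) := by
    rw [integral_mul_const, transFT Φ (t₁ + t₂) ξ₂]
    ring
  rw [hfactor2]
  ring

lemma conv_bound (A : ℝ) (hA : 0 ≤ A) (C : ℝ) (hC : 0 ≤ C) (t₂ : ℝ) :
    ∫⁻ t₁ : ℝ, ENNReal.ofReal (A / (1 + |t₁|)) * ENNReal.ofReal (C / (1 + (t₁ + t₂)^2))
      ≤ ENNReal.ofReal ((2 * Real.pi + 8) * A * C / (1 + |t₂|)) := by
  set S : Set ℝ := {t₁ : ℝ | |t₂| / 2 ≤ |t₁|} with hS_def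
  have hSmeas : MeasurableSet S := measurableSet_le measurable_const measurable_abs
  rw [← lintegral_add_compl _ hSmeas]
  have hSbound : ∫⁻ t₁ in S, ENNReal.ofReal (A / (1 + |t₁|))
      * ENNReal.ofReal (C / (1 + (t₁ + t₂)^2))
      ≤ ENNReal.ofReal (2 * A / (1 + |t₂|)) * ENNReal.ofReal (C * Real.pi) := by
    have hpt : ∀ t₁ ∈ S, ENNReal.ofReal (A / (1 + |t₁|))
        * ENNReal.ofReal (C / (1 + (t₁ + t₂)^2))
        ≤ ENNReal.ofReal (2 * A / (1 + |t₂|)) * ENNReal.ofReal (C / (1 + (t₁ + t₂)^2)) := by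
      intro t₁ ht₁
      apply mul_le_mul_left
      apply ENNReal.ofReal_le_ofReal
      rw [div_le_div_iff₀ (by positivity) (by positivity)]
      rw [hS_def, Set.mem_setOf_eq] at ht₁
      nlinarith [abs_nonneg t₁, abs_nonneg t₂]
    calc ∫⁻ t₁ in S, ENNReal.ofReal (A / (1 + |t₁|)) * ENNReal.ofReal (C / (1 + (t₁ + t₂)^2))
        ≤ ∫⁻ t₁ in S, ENNReal.ofReal (2 * A / (1 + |t₂|))
            * ENNReal.ofReal (C / (1 + (t₁ + t₂)^2)) := setLIntegral_mono' hSmeas hpt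
    _ ≤ ∫⁻ t₁ : ℝ, ENNReal.ofReal (2 * A / (1 + |t₂|))
            * ENNReal.ofReal (C / (1 + (t₁ + t₂)^2)) := setLIntegral_le_lintegral _ _
    _ = ENNReal.ofReal (2 * A / (1 + |t₂|))
            * ∫⁻ t₁ : ℝ, ENNReal.ofReal (C / (1 + (t₁ + t₂)^2)) :=
          lintegral_const_mul' _ _ ENNReal.ofReal_ne_top
    _ = ENNReal.ofReal (2 * A / (1 + |t₂|)) * ENNReal.ofReal (C * Real.pi) := by
          congr 1
          have hint : Integrable (fun t₁ : ℝ => C / (1 + (t₁ + t₂)^2)) := by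
            simp only [div_eq_mul_inv]
            exact (integrable_inv_one_add_sq.comp_add_right t₂).const_mul C
          rw [← ofReal_integral_eq_lintegral_ofReal hint
            (Filter.Eventually.of_forall fun t₁ => by positivity)]
          congr 1
          simp only [div_eq_mul_inv]
          rw [integral_const_mul]
          congr 1
          rw [show (fun t₁ : ℝ => (1 + (t₁ + t₂)^2)⁻¹) = fun t₁ => (fun s : ℝ => (1 + s^2)⁻¹) (t₁ + t₂) from rfl]
          rw [integral_add_right_eq_self (fun s : ℝ => (1 + s^2)⁻¹) t₂]
          exact integral_univ_inv_one_add_sq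
  have hScbound : ∫⁻ t₁ in Sᶜ, ENNReal.ofReal (A / (1 + |t₁|))
      * ENNReal.ofReal (C / (1 + (t₁ + t₂)^2))
      ≤ ENNReal.ofReal (4 * A * C / (1 + t₂^2)) * ENNReal.ofReal |t₂| := by
    have hpt : ∀ t₁ ∈ Sᶜ, ENNReal.ofReal (A / (1 + |t₁|))
        * ENNReal.ofReal (C / (1 + (t₁ + t₂)^2))
        ≤ ENNReal.ofReal (4 * A * C / (1 + t₂^2)) := by
      intro t₁ ht₁
      rw [Set.mem_compl_iff, hS_def, Set.mem_setOf_eq, not_le] at ht₁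
      rw [← ENNReal.ofReal_mul (by positivity)]
      apply ENNReal.ofReal_le_ofReal
      have h1 : A / (1 + |t₁|) ≤ A := by
        apply div_le_self hA
        nlinarith [abs_nonneg t₁]
      have habs : |t₂| / 2 ≤ |t₁ + t₂| := by
        have h := abs_sub_abs_le_abs_sub t₂ (-t₁)
        rw [sub_neg_eq_add, abs_neg] at h
        have hcomm : |t₂ + t₁| = |t₁ + t₂| := by rw [add_comm]
        rw [hcomm] at h
        linarith
      have h2 : C / (1 + (t₁ + t₂)^2) ≤ 4 * C / (1 + t₂^2) := by
        rw [div_le_div_iff₀ (by positivity) (by positivity)]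
        have hsq : t₂^2 / 4 ≤ (t₁ + t₂)^2 := by
          have e1 := _root_.sq_abs (t₁ + t₂)
          have e2 := _root_.sq_abs t₂
          nlinarith [abs_nonneg (t₁ + t₂), abs_nonneg t₂]
        nlinarith [sq_nonneg t₂, sq_nonneg (t₁ + t₂), hC]
      calc A / (1 + |t₁|) * (C / (1 + (t₁ + t₂)^2)) ≤ A * (4 * C / (1 + t₂^2)) := by
            apply mul_le_mul h1 h2 (by positivity) hA
      _ = 4 * A * C / (1 + t₂^2) := by ring
    calc ∫⁻ t₁ in Sᶜ, ENNReal.ofReal (A / (1 + |t₁|)) * ENNReal.ofReal (C / (1 + (t₁ + t₂)^2))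
        ≤ ∫⁻ _ in Sᶜ, ENNReal.ofReal (4 * A * C / (1 + t₂^2)) :=
          setLIntegral_mono' hSmeas.compl hpt
    _ = ENNReal.ofReal (4 * A * C / (1 + t₂^2)) * volume Sᶜ := by
          rw [setLIntegral_const]
    _ ≤ ENNReal.ofReal (4 * A * C / (1 + t₂^2)) * ENNReal.ofReal |t₂| := by
          gcongr
          have hsub : Sᶜ ⊆ Set.Ioo (-(|t₂|/2)) (|t₂|/2) := by
            intro u hu
            rw [Set.mem_compl_iff, hS_def, Set.mem_setOf_eq, not_le, abs_lt] at hu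
            rw [Set.mem_Ioo]
            constructor <;> linarith [hu.1, hu.2]
          calc volume Sᶜ ≤ volume (Set.Ioo (-(|t₂|/2)) (|t₂|/2)) := measure_mono hsub
          _ = ENNReal.ofReal (|t₂|/2 - -(|t₂|/2)) := by rw [Real.volume_Ioo]
          _ = ENNReal.ofReal |t₂| := by congr 1; ring
  calc (∫⁻ t₁ in S, ENNReal.ofReal (A / (1 + |t₁|)) * ENNReal.ofReal (C / (1 + (t₁ + t₂)^2)))
      + ∫⁻ t₁ in Sᶜ, ENNReal.ofReal (A / (1 + |t₁|)) * ENNReal.ofReal (C / (1 + (t₁ + t₂)^2))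
      ≤ ENNReal.ofReal (2 * A / (1 + |t₂|)) * ENNReal.ofReal (C * Real.pi)
        + ENNReal.ofReal (4 * A * C / (1 + t₂^2)) * ENNReal.ofReal |t₂| :=
        add_le_add hSbound hScbound
  _ = ENNReal.ofReal (2 * A / (1 + |t₂|) * (C * Real.pi))
        + ENNReal.ofReal (4 * A * C / (1 + t₂^2) * |t₂|) := by
        rw [← ENNReal.ofReal_mul (by positivity), ← ENNReal.ofReal_mul (by positivity)]
  _ ≤ ENNReal.ofReal ((2 * Real.pi + 8) * A * C / (1 + |t₂|)) := by
        rw [← ENNReal.ofReal_add (by positivity) (by positivity)]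
        apply ENNReal.ofReal_le_ofReal
        have e1 : 2 * A / (1 + |t₂|) * (C * Real.pi) = 2 * Real.pi * A * C / (1 + |t₂|) := by
          ring
        have e2 : 4 * A * C / (1 + t₂^2) * |t₂| ≤ 8 * A * C / (1 + |t₂|) := by
          rw [div_mul_eq_mul_div, div_le_div_iff₀ (by positivity) (by positivity)]
          have : |t₂|^2 = t₂^2 := _root_.sq_abs t₂
          nlinarith [abs_nonneg t₂, _root_.sq_abs t₂, mul_nonneg hA hC, sq_nonneg (1 - |t₂|),
            mul_nonneg (mul_nonneg hA hC) (sq_nonneg (1 - |t₂|))]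
        rw [e1]
        have : (2 * Real.pi + 8) * A * C / (1 + |t₂|)
            = 2 * Real.pi * A * C / (1 + |t₂|) + 8 * A * C / (1 + |t₂|) := by ring
        linarith

lemma tail_finite (D : ℝ) (hD : 0 ≤ D) (r : ℝ) (hr : 1 < r) :
    ∫⁻ t₂ : ℝ, (ENNReal.ofReal (D / (1 + |t₂|))) ^ r < ∞ := by
  have hr0 : (0:ℝ) ≤ r := by linarith
  have hpt : ∀ t₂ : ℝ, (ENNReal.ofReal (D / (1 + |t₂|))) ^ r
      = ENNReal.ofReal D ^ r * ENNReal.ofReal ((1 + ‖t₂‖) ^ (-r)) := by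
    intro t₂
    rw [ENNReal.ofReal_rpow_of_nonneg (by positivity) hr0,
      ENNReal.ofReal_rpow_of_nonneg hD hr0,
      ← ENNReal.ofReal_mul (by positivity)]
    congr 1
    rw [Real.div_rpow hD (by positivity), Real.norm_eq_abs,
      Real.rpow_neg (by positivity), div_eq_mul_inv]
  simp only [hpt]
  rw [lintegral_const_mul' _ _ (by
    exact ENNReal.rpow_ne_top_of_nonneg hr0 ENNReal.ofReal_ne_top)]
  apply ENNReal.mul_lt_top (ENNReal.rpow_lt_top_of_nonneg hr0 ENNReal.ofReal_ne_top)
  apply finite_integral_one_add_norm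
  simpa using hr

lemma mkPhi (ψ₁ : SchwartzMap ℝ ℝ) :
    ∃ Φ : SchwartzMap ℝ ℂ, ∀ y : ℝ, Φ y = ((ψ₁ y - ψ₁ (-y) : ℝ) : ℂ) := by
  refine ⟨SchwartzMap.bilinLeftCLM (ContinuousLinearMap.lsmul ℝ ℝ : ℝ →L[ℝ] ℂ →L[ℝ] ℂ) (.const 1)
      (ψ₁ - SchwartzMap.compCLMOfContinuousLinearEquiv ℝ (ContinuousLinearEquiv.neg ℝ) ψ₁),
    fun y => ?_⟩
  simp [SchwartzMap.bilinLeftCLM, SchwartzMap.mkCLM, SchwartzMap.mkLM]; rfl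

/-- the symbol of the bilinear Hilbert transform lies in
`𝓜^{(∞,1,r);(∞,∞,1)}` for every `r > 1`. -/
theorem stmt14 (ψ₁ : SchwartzMap ℝ ℝ)
    (hpos : ∀ y, 0 ≤ ψ₁ y) (hle : ∀ y, ψ₁ y ≤ 1)
    (hsupp : tsupport (⇑ψ₁) ⊆ Set.Ioo 0 1)
    (ψ : ℝ → ℂ) (hψ : ψ = fun y => ((ψ₁ y - ψ₁ (-y) : ℝ) : ℂ))
    (Ψ : ℝ × ℝ × ℝ → ℂ) (hΨ : Ψ = fun X => ψ X.1 * ψ X.2.2 * ψ (X.2.1 - X.2.2))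
    (σBH : ℝ × ℝ × ℝ → ℂ)
    (hσBH : σBH = fun X => -(Real.pi : ℂ) * Complex.I * (Real.sign (X.2.1 - X.2.2) : ℝ))
    (r : ℝ) (hr : 1 < r) :
    (∫⁻ ν : ℝ, ⨆ ξ₁ : ℝ, ⨆ ξ₂ : ℝ,
        (∫⁻ t₂ : ℝ,
          (∫⁻ t₁ : ℝ, ⨆ x : ℝ, (‖symbSTFT3 Ψ σBH x t₁ t₂ ξ₁ ξ₂ ν‖₊ : ℝ≥0∞)) ^ r) ^ (1 / r))
      < ∞ := by
  classical
  obtain ⟨Φ, hΦ⟩ := mkPhi ψ₁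
  have hz : ∀ z : ℝ, z ∉ Set.Ioo (0:ℝ) 1 → ψ₁ z = 0 := fun z h =>
    image_eq_zero_of_notMem_tsupport fun hm => h (hsupp hm)
  have h0 : ∀ y : ℝ, 1 ≤ |y| → Φ y = 0 := by
    intro y hy
    rw [hΦ]
    rw [le_abs] at hy
    have h1 : ψ₁ y = 0 := by
      apply hz; rw [Set.mem_Ioo]; push_neg; intro hy0
      rcases hy with h | h
      · linarith
      · linarith
    have h2 : ψ₁ (-y) = 0 := by
      apply hz; rw [Set.mem_Ioo]; push_neg; intro hy0
      rcases hy with h | h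
      · linarith
      · linarith
    rw [h1, h2]; simp
  have hbd : ∀ y : ℝ, ‖Φ y‖ ≤ 1 := by
    intro y
    rw [hΦ, Complex.norm_real, Real.norm_eq_abs]
    rcases le_or_gt y 0 with h | h
    · have h1 : ψ₁ y = 0 := hz y (by rw [Set.mem_Ioo]; push_neg; intro h0'; linarith)
      rw [h1, zero_sub, abs_neg, abs_le]
      exact ⟨by linarith [hpos (-y)], hle (-y)⟩
    · have h2 : ψ₁ (-y) = 0 := hz (-y) (by rw [Set.mem_Ioo]; push_neg; intro h0'; linarith)
      rw [h2, sub_zero, abs_le]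
      exact ⟨by linarith [hpos y], hle y⟩
  have hΨe : Ψ = fun X : ℝ × ℝ × ℝ => Φ X.1 * Φ X.2.2 * Φ (X.2.1 - X.2.2) := by
    funext X
    simp only [hΨ, hψ, hΦ]
  rw [hΨe, hσBH]
  set Ψ' : ℝ × ℝ × ℝ → ℂ := fun X : ℝ × ℝ × ℝ => Φ X.1 * Φ X.2.2 * Φ (X.2.1 - X.2.2)
    with hΨ'_def
  set σ' : ℝ × ℝ × ℝ → ℂ := fun X : ℝ × ℝ × ℝ =>
      -(Real.pi : ℂ) * Complex.I * (Real.sign (X.2.1 - X.2.2) : ℝ) with hσ'_def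
  obtain ⟨K, hK0, hK⟩ := G_bound Φ h0 hbd
  set W : SchwartzMap ℝ ℂ := SchwartzMap.fourierTransformCLM ℝ Φ with hW_def
  have hWf : ∀ s : ℝ, W s = 𝓕 (⇑Φ) s := fun s => by
    rw [hW_def, SchwartzMap.fourierTransformCLM_apply, SchwartzMap.fourier_coe]
  obtain ⟨Cw, hCw0, hCw⟩ := schwartz_decay2 W
  have hCw' : ∀ s : ℝ, ‖𝓕 (⇑Φ) s‖ ≤ Cw / (1 + s^2) := fun s => by
    rw [← hWf]; exact hCw s
  set A : ℝ := Real.pi * K with hA_def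
  have hA0 : 0 ≤ A := by positivity
  set D : ℝ := (2 * Real.pi + 8) * A * Cw with hD_def
  have hD0 : 0 ≤ D := by positivity
  set M : ℝ → ℝ≥0∞ := fun ν => ENNReal.ofReal ‖𝓕 (⇑Φ) ν‖ with hM_def
  have hMne : ∀ ν : ℝ, M ν ≠ ∞ := fun ν => ENNReal.ofReal_ne_top
  have hr0 : (0:ℝ) ≤ r := by linarith
  have hrne : r ≠ 0 := by linarith
  have hpt : ∀ x t₁ t₂ ξ₁ ξ₂ ν : ℝ,
      (‖symbSTFT3 Ψ' σ' x t₁ t₂ ξ₁ ξ₂ ν‖₊ : ℝ≥0∞)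
      ≤ M ν * (ENNReal.ofReal (A / (1 + |t₁|))
          * ENNReal.ofReal (Cw / (1 + (t₁ + t₂)^2))) := by
    intro x t₁ t₂ ξ₁ ξ₂ ν
    rw [hΨ'_def, hσ'_def, ← enorm_eq_nnnorm, ← ofReal_norm,
      factorize Φ h0 hbd x t₁ t₂ ξ₁ ξ₂ ν]
    set GI : ℂ := ∫ u : ℝ, (Real.sign u : ℂ) * Φ (u - (ξ₁ - ξ₂)) * e2pi (t₁ * u) with hGI_def
    have hnormc : ‖(-(Real.pi:ℂ) * Complex.I)‖ = Real.pi := by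
      simp [abs_of_pos Real.pi_pos]
    have hnorm : ‖(e2pi (-ν * x) * 𝓕 (⇑Φ) ν) * ((-(Real.pi:ℂ) * Complex.I)
        * GI * (e2pi ((t₁ + t₂) * ξ₂) * 𝓕 (⇑Φ) (-(t₁ + t₂))))‖
        = ‖𝓕 (⇑Φ) ν‖ * (Real.pi * ‖GI‖
            * ‖𝓕 (⇑Φ) (-(t₁ + t₂))‖) := by
      simp only [norm_mul, norm_e2pi, hnormc, one_mul]
    rw [hnorm]
    have hle1 : ‖GI‖ ≤ K / (1 + |t₁|) := hK t₁ (ξ₁ - ξ₂)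
    have hle2 : ‖𝓕 (⇑Φ) (-(t₁ + t₂))‖ ≤ Cw / (1 + (t₁ + t₂)^2) := by
      have h := hCw' (-(t₁ + t₂))
      rwa [neg_sq] at h
    have hreal : ‖𝓕 (⇑Φ) ν‖ * (Real.pi * ‖GI‖
        * ‖𝓕 (⇑Φ) (-(t₁ + t₂))‖)
        ≤ ‖𝓕 (⇑Φ) ν‖ * (A / (1 + |t₁|) * (Cw / (1 + (t₁ + t₂)^2))) := by
      apply mul_le_mul_of_nonneg_left _ (norm_nonneg _)
      calc Real.pi * ‖GI‖ * ‖𝓕 (⇑Φ) (-(t₁ + t₂))‖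
          ≤ Real.pi * (K / (1 + |t₁|)) * (Cw / (1 + (t₁ + t₂)^2)) := by
            apply mul_le_mul (mul_le_mul_of_nonneg_left hle1 Real.pi_pos.le) hle2
              (norm_nonneg _) (by positivity)
      _ = A / (1 + |t₁|) * (Cw / (1 + (t₁ + t₂)^2)) := by rw [hA_def]; ring
    calc ENNReal.ofReal (‖𝓕 (⇑Φ) ν‖ * (Real.pi * ‖GI‖
          * ‖𝓕 (⇑Φ) (-(t₁ + t₂))‖))
        ≤ ENNReal.ofReal (‖𝓕 (⇑Φ) ν‖
            * (A / (1 + |t₁|) * (Cw / (1 + (t₁ + t₂)^2)))) := ENNReal.ofReal_le_ofReal hreal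
    _ = M ν * (ENNReal.ofReal (A / (1 + |t₁|)) * ENNReal.ofReal (Cw / (1 + (t₁ + t₂)^2))) := by
        rw [hM_def]
        rw [ENNReal.ofReal_mul (norm_nonneg _), ENNReal.ofReal_mul (by positivity)]
  set Efin : ℝ≥0∞ := ∫⁻ t₂ : ℝ, (ENNReal.ofReal (D / (1 + |t₂|))) ^ r with hEfin_def
  have hEfin : Efin < ∞ := tail_finite D hD0 r hr
  have step1 : ∀ ν ξ₁ ξ₂ t₂ : ℝ,
      (∫⁻ t₁ : ℝ, ⨆ x : ℝ, (‖symbSTFT3 Ψ' σ' x t₁ t₂ ξ₁ ξ₂ ν‖₊ : ℝ≥0∞))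
      ≤ M ν * ENNReal.ofReal (D / (1 + |t₂|)) := by
    intro ν ξ₁ ξ₂ t₂
    calc (∫⁻ t₁ : ℝ, ⨆ x : ℝ, (‖symbSTFT3 Ψ' σ' x t₁ t₂ ξ₁ ξ₂ ν‖₊ : ℝ≥0∞))
        ≤ ∫⁻ t₁ : ℝ, M ν * (ENNReal.ofReal (A / (1 + |t₁|))
            * ENNReal.ofReal (Cw / (1 + (t₁ + t₂)^2))) :=
          lintegral_mono fun t₁ => iSup_le fun x => hpt x t₁ t₂ ξ₁ ξ₂ ν
    _ = M ν * ∫⁻ t₁ : ℝ, ENNReal.ofReal (A / (1 + |t₁|))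
            * ENNReal.ofReal (Cw / (1 + (t₁ + t₂)^2)) :=
          lintegral_const_mul' _ _ (hMne ν)
    _ ≤ M ν * ENNReal.ofReal (D / (1 + |t₂|)) := by
          apply mul_le_mul_right
          rw [hD_def]
          exact conv_bound A hA0 Cw hCw0.le t₂
  have step2 : ∀ ν ξ₁ ξ₂ : ℝ,
      (∫⁻ t₂ : ℝ, (∫⁻ t₁ : ℝ, ⨆ x : ℝ,
        (‖symbSTFT3 Ψ' σ' x t₁ t₂ ξ₁ ξ₂ ν‖₊ : ℝ≥0∞)) ^ r) ^ (1/r)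
      ≤ M ν * Efin ^ (1/r) := by
    intro ν ξ₁ ξ₂
    have h1 : (∫⁻ t₂ : ℝ, (∫⁻ t₁ : ℝ, ⨆ x : ℝ, (‖symbSTFT3 Ψ' σ' x t₁ t₂ ξ₁ ξ₂ ν‖₊ : ℝ≥0∞)) ^ r)
        ≤ M ν ^ r * Efin := by
      calc (∫⁻ t₂ : ℝ, (∫⁻ t₁ : ℝ, ⨆ x : ℝ, (‖symbSTFT3 Ψ' σ' x t₁ t₂ ξ₁ ξ₂ ν‖₊ : ℝ≥0∞)) ^ r)
          ≤ ∫⁻ t₂ : ℝ, (M ν * ENNReal.ofReal (D / (1 + |t₂|))) ^ r :=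
            lintegral_mono fun t₂ => ENNReal.rpow_le_rpow (step1 ν ξ₁ ξ₂ t₂) hr0
      _ = ∫⁻ t₂ : ℝ, M ν ^ r * (ENNReal.ofReal (D / (1 + |t₂|))) ^ r := by
            simp only [ENNReal.mul_rpow_of_nonneg _ _ hr0]
      _ = M ν ^ r * Efin :=
            lintegral_const_mul' _ _ (ENNReal.rpow_ne_top_of_nonneg hr0 (hMne ν))
    calc (∫⁻ t₂ : ℝ, (∫⁻ t₁ : ℝ, ⨆ x : ℝ,
          (‖symbSTFT3 Ψ' σ' x t₁ t₂ ξ₁ ξ₂ ν‖₊ : ℝ≥0∞)) ^ r) ^ (1/r)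
        ≤ (M ν ^ r * Efin) ^ (1/r) := ENNReal.rpow_le_rpow h1 (by positivity)
    _ = M ν * Efin ^ (1/r) := by
        rw [ENNReal.mul_rpow_of_nonneg _ _ (by positivity), ← ENNReal.rpow_mul,
          mul_one_div_cancel hrne, ENNReal.rpow_one]
  have hMint : (∫⁻ ν : ℝ, M ν) < ∞ := by
    have heq : ∀ ν : ℝ, M ν = (‖W ν‖₊ : ℝ≥0∞) := fun ν => by
      simp only [hM_def]
      rw [← hWf ν]; exact ofReal_norm _
    simp only [heq]
    exact W.integrable.2
  calc (∫⁻ ν : ℝ, ⨆ ξ₁ : ℝ, ⨆ ξ₂ : ℝ,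
        (∫⁻ t₂ : ℝ, (∫⁻ t₁ : ℝ, ⨆ x : ℝ,
          (‖symbSTFT3 Ψ' σ' x t₁ t₂ ξ₁ ξ₂ ν‖₊ : ℝ≥0∞)) ^ r) ^ (1/r))
      ≤ ∫⁻ ν : ℝ, M ν * Efin ^ (1/r) :=
        lintegral_mono fun ν => iSup_le fun ξ₁ => iSup_le fun ξ₂ => step2 ν ξ₁ ξ₂
  _ = (∫⁻ ν : ℝ, M ν) * Efin ^ (1/r) :=
        lintegral_mul_const' _ _ (ENNReal.rpow_ne_top_of_nonneg (by positivity) hEfin.ne)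
  _ < ∞ := ENNReal.mul_lt_top hMint
        (ENNReal.rpow_lt_top_of_nonneg (by positivity) hEfin.ne)

end
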